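/- For every integer j ≥ 0 there exists a polynomial p with real coefficients of degree exactly j, with leading coefficient e^{−a−b}/j!, such that Φ_j(x) = p(x) for every x ∈ ℤ. -/

import Mathlib

open Complex MeasureTheory
open scoped Real

/-- `Φ_j(x) = (1/(2πi)) ∮_{|z−1|=r} z^{x+n} (z−1)^{−(j+1)} e^{−az − b/z} dz`. -/
noncomputable def Phi (n : ℕ) (a b r : ℝ) (j : ℕ) (x : ℤ) : ℂ :=
  (2 * (Real.pi : ℂ) * Complex.I)⁻¹ *
    ∮ z in C(1, r), z ^ (x + (n : ℤ)) * (z - 1) ^ (-((j : ℤ) + 1)) *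
      Complex.exp (-((a : ℂ) * z) - (b : ℂ) / z)

section PolyAux
open Polynomial

/-- Forward difference of `descPochhammer`. -/
lemma delta_descPochhammer (k : ℕ) :
    (descPochhammer ℝ (k+1)).comp (X + 1) - descPochhammer ℝ (k+1)
      = (k+1 : ℝ[X]) * descPochhammer ℝ k := by
  have h1 : (descPochhammer ℝ (k+1)).comp (X + 1) = (X + 1) * descPochhammer ℝ k := by
    rw [descPochhammer_succ_left, mul_comp, X_comp, comp_assoc]
    simp
  have h2 : descPochhammer ℝ (k+1) = descPochhammer ℝ k * (X - (k : ℝ[X])) :=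
    descPochhammer_succ_right ℝ k
  rw [h1, h2]
  ring

/-- Surjectivity (with degree bound) of the forward-difference operator. -/
lemma delta_surj (d : ℕ) : ∀ p : ℝ[X], p.degree < (d : ℕ) →
    ∃ q : ℝ[X], q.comp (X + 1) - q = p ∧ q.degree ≤ (d : ℕ) := by
  induction d with
  | zero =>
    intro p hp
    have hp0 : p = 0 := by
      ext k
      simpa using (Polynomial.degree_lt_iff_coeff_zero p 0).mp (by exact_mod_cast hp) k (Nat.zero_le k)
    exact ⟨0, by simp [hp0], by simp⟩
  | succ d ih =>
    intro p hp
    set c : ℝ := p.coeff d with hc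
    have hdesc : (descPochhammer ℝ d).natDegree = d := descPochhammer_natDegree ℝ d
    have hmonic : (descPochhammer ℝ d).Monic := monic_descPochhammer ℝ d
    have hcoeffd : (descPochhammer ℝ d).coeff d = 1 := by
      have h := hmonic.coeff_natDegree
      rwa [hdesc] at h
    have hp' : (p - C c * descPochhammer ℝ d).degree < (d : ℕ) := by
      rw [Polynomial.degree_lt_iff_coeff_zero]
      intro m hm
      rcases eq_or_lt_of_le hm with h | h
      · subst h
        simp [coeff_C_mul, hcoeffd, hc]
      · have h1 : p.coeff m = 0 := by
          have := (Polynomial.degree_lt_iff_coeff_zero p (d+1)).mp hp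
          exact this m (by exact_mod_cast h)
        have h2 : (descPochhammer ℝ d).coeff m = 0 :=
          Polynomial.coeff_eq_zero_of_natDegree_lt (by omega)
        simp [h1, coeff_C_mul, h2]
    obtain ⟨q₁, hq₁, hdeg₁⟩ := ih _ hp'
    have hdne : ((d : ℝ) + 1) ≠ 0 := by positivity
    have hΔQ : (C (c/(d+1)) * descPochhammer ℝ (d+1)).comp (X+1)
        - C (c/(d+1)) * descPochhammer ℝ (d+1)
        = C c * descPochhammer ℝ d := by
      rw [mul_comp, C_comp, ← mul_sub, delta_descPochhammer d, ← mul_assoc]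
      congr 1
      rw [show ((d : ℝ[X]) + 1) = C ((d : ℝ) + 1) by rw [C_add, C_1, C_eq_natCast],
        ← C_mul, div_mul_cancel₀ _ hdne]
    refine ⟨q₁ + C (c/(d+1)) * descPochhammer ℝ (d+1), ?_, ?_⟩
    · rw [add_comp]
      linear_combination hq₁ + hΔQ
    · refine (Polynomial.degree_add_le _ _).trans (max_le ?_ ?_)
      · exact hdeg₁.trans (by exact_mod_cast Nat.cast_le.mpr (Nat.le_succ d))
      · refine (Polynomial.degree_mul_le _ _).trans ?_
        have : (descPochhammer ℝ (d+1)).degree ≤ ((d+1 : ℕ) : WithBot ℕ) :=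
          Polynomial.degree_le_natDegree.trans (by simp [descPochhammer_natDegree])
        calc (C (c/(d+1))).degree + (descPochhammer ℝ (d+1)).degree
            ≤ 0 + ((d+1 : ℕ) : WithBot ℕ) := add_le_add Polynomial.degree_C_le this
          _ = ((d+1 : ℕ) : WithBot ℕ) := by rw [zero_add]

/-- Given `p` of degree `j`, produce a discrete antiderivative of degree `j+1`. -/
lemma delta_surj_exact (j : ℕ) (p : ℝ[X]) (hdeg : p.degree = (j : ℕ)) :
    ∃ q : ℝ[X], q.comp (X + 1) - q = p ∧ q.degree = ((j+1 : ℕ) : WithBot ℕ) ∧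
      q.leadingCoeff = p.leadingCoeff / (j+1) := by
  set c := p.leadingCoeff with hc
  have hcne : c ≠ 0 := Polynomial.leadingCoeff_ne_zero.mpr (fun h => by simp [h] at hdeg)
  have hnd : p.natDegree = j := Polynomial.natDegree_eq_of_degree_eq_some hdeg
  have hmonic : (descPochhammer ℝ j).Monic := monic_descPochhammer ℝ j
  have hmonic1 : (descPochhammer ℝ (j+1)).Monic := monic_descPochhammer ℝ (j+1)
  have hdescdeg : (descPochhammer ℝ j).degree = (j : ℕ) := by
    rw [Polynomial.degree_eq_natDegree hmonic.ne_zero, descPochhammer_natDegree]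
  have hdescdeg1 : (descPochhammer ℝ (j+1)).degree = ((j+1 : ℕ) : WithBot ℕ) := by
    rw [Polynomial.degree_eq_natDegree hmonic1.ne_zero, descPochhammer_natDegree]
  have hjne : ((j : ℝ) + 1) ≠ 0 := by positivity
  have hcj : c / ((j : ℝ)+1) ≠ 0 := div_ne_zero hcne hjne
  have hp' : (p - C c * descPochhammer ℝ j).degree < (j : ℕ) := by
    rw [← hdeg]
    refine Polynomial.degree_sub_lt ?_ (fun h => by simp [h] at hdeg) ?_
    · rw [hdeg, Polynomial.degree_mul, Polynomial.degree_C hcne, hdescdeg, zero_add]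
    · rw [Polynomial.leadingCoeff_mul, Polynomial.leadingCoeff_C, hmonic.leadingCoeff, mul_one]
  obtain ⟨q₁, hq₁, hdeg₁⟩ := delta_surj j _ hp'
  set Q := C (c/(j+1)) * descPochhammer ℝ (j+1) with hQ
  have hQdeg : Q.degree = ((j+1 : ℕ) : WithBot ℕ) := by
    rw [hQ, Polynomial.degree_mul, Polynomial.degree_C hcj, hdescdeg1, zero_add]
  have hQlc : Q.leadingCoeff = c / (j+1) := by
    rw [hQ, Polynomial.leadingCoeff_mul, Polynomial.leadingCoeff_C, hmonic1.leadingCoeff, mul_one]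
  have hlt : q₁.degree < Q.degree := by
    rw [hQdeg]
    exact lt_of_le_of_lt hdeg₁ (by exact_mod_cast Nat.cast_lt.mpr (Nat.lt_succ_self j))
  have hΔQ : Q.comp (X+1) - Q = C c * descPochhammer ℝ j := by
    rw [hQ, mul_comp, C_comp, ← mul_sub, delta_descPochhammer j, ← mul_assoc]
    congr 1
    rw [show ((j : ℝ[X]) + 1) = C ((j : ℝ) + 1) by rw [C_add, C_1, C_eq_natCast],
      ← C_mul, div_mul_cancel₀ _ hjne]
  refine ⟨q₁ + Q, ?_, ?_, ?_⟩
  · rw [add_comp]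
    linear_combination hq₁ + hΔQ
  · rw [Polynomial.degree_add_eq_right_of_degree_lt hlt, hQdeg]
  · rw [Polynomial.leadingCoeff_add_of_degree_lt hlt, hQlc]
lemma sphere_ne (r : ℝ) (hr0 : 0 < r) (hr1 : r < 1) {z : ℂ}
    (hz : z ∈ Metric.sphere (1:ℂ) r) : z ≠ 0 ∧ z ≠ 1 := by
  rw [Metric.mem_sphere] at hz
  constructor
  · rintro rfl
    rw [dist_eq] at hz
    simp at hz
    exact absurd hz.symm (ne_of_lt hr1)
  · rintro rfl
    rw [dist_self] at hz
    exact absurd hz.symm (ne_of_gt hr0)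

/-- The value of `Φ_0`. -/
lemma phi_zero (n : ℕ) (a b r : ℝ) (hr0 : 0 < r) (hr1 : r < 1) (x : ℤ) :
    Phi n a b r 0 x = ((Real.exp (-a - b) : ℝ) : ℂ) := by
  set g : ℂ → ℂ := fun z => z ^ (x + (n:ℤ)) * Complex.exp (-((a:ℂ) * z) - (b:ℂ)/z) with hg
  have hne : ∀ z : ℂ, z ∈ Metric.closedBall (1:ℂ) r → z ≠ 0 := by
    intro z hz h0
    rw [Metric.mem_closedBall, h0, dist_eq] at hz
    simp at hz
    linarith
  have hd : DifferentiableOn ℂ g (Metric.closedBall 1 r) := by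
    intro z hz
    have hz0 := hne z hz
    exact ((differentiableAt_zpow.mpr (Or.inl hz0)).mul
      ((((differentiableAt_id.const_mul _).neg).sub
        ((differentiableAt_const (b:ℂ)).div differentiableAt_id hz0)).cexp)).differentiableWithinAt
  have key := hd.circleIntegral_sub_inv_smul (Metric.mem_ball_self hr0)
  have hcongr : (∮ z in C(1, r), z ^ (x + (n:ℤ)) * (z - 1) ^ (-((0:ℕ) : ℤ) - 1) *
      Complex.exp (-((a:ℂ) * z) - (b:ℂ)/z)) = ∮ z in C(1, r), (z - 1)⁻¹ • g z := by
    congr 1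
    funext z
    have : ((-((0:ℕ):ℤ)) - 1) = (-1 : ℤ) := by norm_num
    rw [this, zpow_neg_one, smul_eq_mul, hg]
    ring
  rw [Phi]
  have : (∮ z in C(1, r), z ^ (x + (n:ℤ)) * (z - 1) ^ (-(((0:ℕ):ℤ) + 1)) *
      Complex.exp (-((a:ℂ) * z) - (b:ℂ)/z)) = (2 * (Real.pi:ℂ) * I) • g 1 := by
    rw [show (-(((0:ℕ):ℤ) + 1)) = -((0:ℕ):ℤ) - 1 by ring] at *
    rw [hcongr, key]
  rw [this, smul_eq_mul, ← mul_assoc, inv_mul_cancel₀ two_pi_I_ne_zero, one_mul, hg]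
  simp only [one_zpow, one_mul, mul_one, div_one]
  rw [Complex.ofReal_exp]
  push_cast
  ring_nf

/-- Continuity of the integrand on the circle. -/
lemma integrand_integrable (a b r : ℝ) (hr0 : 0 < r) (hr1 : r < 1) (m e : ℤ) :
    CircleIntegrable (fun z : ℂ => z ^ m * (z - 1) ^ e *
      Complex.exp (-((a:ℂ) * z) - (b:ℂ)/z)) 1 r := by
  apply ContinuousOn.circleIntegrable hr0.le
  intro z hz
  obtain ⟨hz0, hz1⟩ := sphere_ne r hr0 hr1 hz
  have hz1' : z - 1 ≠ 0 := sub_ne_zero.mpr hz1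
  exact (((differentiableAt_zpow.mpr (Or.inl hz0)).mul
    ((differentiableAt_id.sub_const 1).zpow (Or.inl hz1'))).mul
    (((differentiableAt_id.const_mul (a:ℂ)).neg.sub
      ((differentiableAt_const (b:ℂ)).div differentiableAt_id hz0)).cexp)).continuousAt.continuousWithinAt

/-- Forward-difference recurrence for `Φ`. -/
lemma phi_rec (n : ℕ) (a b r : ℝ) (hr0 : 0 < r) (hr1 : r < 1) (j : ℕ) (x : ℤ) :
    Phi n a b r (j+1) (x+1) - Phi n a b r (j+1) x = Phi n a b r j x := by
  set E : ℂ → ℂ := fun z => Complex.exp (-((a:ℂ) * z) - (b:ℂ)/z) with hE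
  have h1 := integrand_integrable a b r hr0 hr1 (x + 1 + (n:ℤ)) (-(((j:ℤ)+1) + 1))
  have h2 := integrand_integrable a b r hr0 hr1 (x + (n:ℤ)) (-(((j:ℤ)+1) + 1))
  rw [Phi, Phi, Phi, ← mul_sub]
  congr 1
  push_cast
  rw [← circleIntegral.integral_sub h1 h2]
  apply circleIntegral.integral_congr hr0.le
  intro z hz
  obtain ⟨hz0, hz1⟩ := sphere_ne r hr0 hr1 hz
  have hz1' : z - 1 ≠ 0 := sub_ne_zero.mpr hz1
  have hzp : z ^ (x + 1 + (n:ℤ)) = z ^ (x + (n:ℤ)) * z := by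
    rw [show x + 1 + (n:ℤ) = (x + (n:ℤ)) + 1 by ring, zpow_add_one₀ hz0]
  have hwp : (z - 1) * (z - 1) ^ (-(((j:ℤ)+1) + 1)) = (z - 1) ^ (-((j:ℤ)+1)) := by
    rw [show (-((j:ℤ)+1)) = 1 + (-(((j:ℤ)+1) + 1)) by ring, zpow_add₀ hz1', zpow_one]
  show z ^ (x + 1 + (n:ℤ)) * (z-1) ^ (-(((j+1:ℕ):ℤ) + 1)) * E z
      - z ^ (x + (n:ℤ)) * (z-1) ^ (-(((j+1:ℕ):ℤ) + 1)) * E z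
      = z ^ (x + (n:ℤ)) * (z-1) ^ (-((j:ℤ)+1)) * E z
  have hc : (-(((j+1:ℕ):ℤ) + 1)) = (-(((j:ℤ)+1) + 1)) := by push_cast; ring
  rw [hc, hzp, ← hwp]
  ring

private lemma my_intervalIntegral_conj {f : ℝ → ℂ} {a b : ℝ} :
    ∫ x in a..b, (starRingEnd ℂ) (f x) = (starRingEnd ℂ) (∫ x in a..b, f x) := by
  rw [intervalIntegral, intervalIntegral, integral_conj, integral_conj, ← map_sub]

/-- `Φ` takes real values (conjugation symmetry). -/
lemma phi_conj (n : ℕ) (a b r : ℝ) (j : ℕ) (x : ℤ) :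
    (starRingEnd ℂ) (Phi n a b r j x) = Phi n a b r j x := by
  set f : ℂ → ℂ := fun z => z ^ (x + (n:ℤ)) * (z - 1) ^ (-((j:ℤ)+1)) *
      Complex.exp (-((a:ℂ) * z) - (b:ℂ)/z) with hf
  have hfc : ∀ z : ℂ, f ((starRingEnd ℂ) z) = (starRingEnd ℂ) (f z) := by
    intro z
    simp only [hf]
    rw [map_mul, map_mul, ← Complex.exp_conj, map_zpow₀, map_zpow₀, map_sub, map_one,
      map_sub, map_neg, map_mul, map_div₀, Complex.conj_ofReal, Complex.conj_ofReal]
  set g : ℝ → ℂ := fun θ => deriv (circleMap 1 r) θ • f (circleMap 1 r θ) with hgdef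
  have hcm : ∀ θ : ℝ, (starRingEnd ℂ) (circleMap 1 r θ) = circleMap 1 r (-θ) := by
    intro θ
    simp only [circleMap]
    rw [map_add, map_mul, ← Complex.exp_conj]
    push_cast
    rw [map_one, Complex.conj_ofReal, map_mul, Complex.conj_ofReal, Complex.conj_I]
    ring_nf
  have hcm0 : ∀ θ : ℝ, (starRingEnd ℂ) (circleMap 0 r θ) = circleMap 0 r (-θ) := by
    intro θ
    simp only [circleMap]
    rw [map_add, map_mul, ← Complex.exp_conj]
    push_cast
    rw [map_zero, Complex.conj_ofReal, map_mul, Complex.conj_ofReal, Complex.conj_I]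
    ring_nf
  have hgkey : ∀ θ : ℝ, (starRingEnd ℂ) (g θ) = -(g (-θ)) := by
    intro θ
    simp only [hgdef, smul_eq_mul, deriv_circleMap]
    rw [map_mul, map_mul, Complex.conj_I, hcm0, ← hfc, hcm]
    ring
  have hper : Function.Periodic g (2 * π) := by
    intro θ
    simp only [hgdef, deriv_circleMap, periodic_circleMap 1 r θ, periodic_circleMap 0 r θ]
  have hint : (starRingEnd ℂ) (∮ z in C(1, r), f z) = -(∮ z in C(1, r), f z) := by
    rw [circleIntegral, ← my_intervalIntegral_conj]
    calc ∫ θ in (0:ℝ)..2*π, (starRingEnd ℂ) (g θ)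
        = ∫ θ in (0:ℝ)..2*π, -(g (-θ)) := by
          apply intervalIntegral.integral_congr
          intro θ _
          exact hgkey θ
      _ = -(∫ θ in (0:ℝ)..2*π, g (-θ)) := intervalIntegral.integral_neg
      _ = -(∫ θ in (-(2*π))..(-0:ℝ), g θ) := by rw [intervalIntegral.integral_comp_neg]
      _ = -(∫ θ in (0:ℝ)..2*π, g θ) := by
          congr 1
          have := hper.intervalIntegral_add_eq (-(2*π)) 0
          rw [show -(2*π) + 2*π = -0 by ring, show (0:ℝ) + 2*π = 2*π by ring] at this
          exact this
      _ = -(∮ z in C(1, r), f z) := by rw [circleIntegral]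
  rw [Phi, map_mul, hint, map_inv₀]
  have hconst : (starRingEnd ℂ) (2 * (Real.pi:ℂ) * I) = -(2 * (Real.pi:ℂ) * I) := by
    rw [map_mul, map_mul, Complex.conj_I, Complex.conj_ofReal, map_ofNat]
    ring
  rw [hconst, inv_neg]
  ring

end PolyAux

/-- `Φ_j` is (the restriction to `ℤ` of) a real polynomial of degree
exactly `j` with leading coefficient `e^{−a−b}/j!`. -/
theorem stmt8 (n : ℕ) (hn : 1 ≤ n) (a b : ℝ)
    (r : ℝ) (hr0 : 0 < r) (hr1 : r < 1) (j : ℕ) :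
    ∃ p : Polynomial ℝ,
      p.degree = j ∧
      p.leadingCoeff = Real.exp (-a - b) / (Nat.factorial j) ∧
      ∀ x : ℤ, Phi n a b r j x = ((p.eval (x : ℝ) : ℝ) : ℂ) := by
  have hreal : ∀ (j' : ℕ) (x : ℤ), Phi n a b r j' x = (((Phi n a b r j' x).re : ℝ) : ℂ) :=
    fun j' x => (Complex.conj_eq_iff_re.mp (phi_conj n a b r j' x)).symm
  induction j with
  | zero =>
    refine ⟨Polynomial.C (Real.exp (-a - b)), ?_, ?_, ?_⟩
    · rw [Polynomial.degree_C (Real.exp_ne_zero _)]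
      simp
    · simp [Polynomial.leadingCoeff_C, Nat.factorial]
    · intro x
      rw [phi_zero n a b r hr0 hr1 x]
      simp
  | succ j ih =>
    obtain ⟨p, hdeg, hlc, hval⟩ := ih
    obtain ⟨q, hΔ, hqdeg, hqlc⟩ := delta_surj_exact j p hdeg
    have hΔeval : ∀ y : ℝ, q.eval (y + 1) - q.eval y = p.eval y := by
      intro y
      have h := congrArg (Polynomial.eval y) hΔ
      simpa [Polynomial.eval_comp] using h
    set t : ℝ := (Phi n a b r (j+1) 0).re - q.eval 0 with ht
    set P : Polynomial ℝ := q + Polynomial.C t with hP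
    have hdegClt : (Polynomial.C t).degree < q.degree := by
      rw [hqdeg]
      exact lt_of_le_of_lt Polynomial.degree_C_le (by exact_mod_cast WithBot.coe_lt_coe.mpr (Nat.succ_pos j))
    have hPdeg : P.degree = ((j+1 : ℕ) : WithBot ℕ) := by
      rw [hP, Polynomial.degree_add_eq_left_of_degree_lt hdegClt, hqdeg]
    have hPlc : P.leadingCoeff = Real.exp (-a - b) / (Nat.factorial (j+1)) := by
      rw [hP, add_comm, Polynomial.leadingCoeff_add_of_degree_lt hdegClt, hqlc, hlc,
        Nat.factorial_succ, div_div]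
      push_cast
      ring_nf
    have hPeval : ∀ y : ℝ, P.eval (y + 1) = P.eval y + p.eval y := by
      intro y
      simp only [hP, Polynomial.eval_add, Polynomial.eval_C]
      have := hΔeval y
      linarith
    refine ⟨P, by exact_mod_cast hPdeg, hPlc, ?_⟩
    intro x
    induction x using Int.induction_on with
    | zero =>
      rw [hreal (j+1) 0]
      have : P.eval ((0:ℤ) : ℝ) = (Phi n a b r (j+1) 0).re := by
        simp [hP, ht]
      rw [this]
    | succ k hk =>
      have h := phi_rec n a b r hr0 hr1 j k
      rw [sub_eq_iff_eq_add] at h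
      rw [h, hk, hval k]
      have hre : P.eval (((k : ℤ) + 1 : ℤ) : ℝ) = P.eval ((k : ℤ) : ℝ) + p.eval ((k : ℤ) : ℝ) := by
        push_cast
        exact hPeval _
      rw [hre]
      push_cast
      ring
    | pred k hk =>
      have h := phi_rec n a b r hr0 hr1 j (-(k:ℤ) - 1)
      rw [show -(k:ℤ) - 1 + 1 = -(k:ℤ) by ring] at h
      have h2 : Phi n a b r (j+1) (-(k:ℤ) - 1) = Phi n a b r (j+1) (-(k:ℤ)) - Phi n a b r j (-(k:ℤ) - 1) := by
        rw [← h]; ring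
      rw [h2, hk, hval (-(k:ℤ) - 1)]
      have hre : P.eval ((-(k:ℤ) - 1 : ℤ) : ℝ) = P.eval ((-(k:ℤ) : ℤ) : ℝ) - p.eval ((-(k:ℤ) - 1 : ℤ) : ℝ) := by
        push_cast
        have := hPeval ((-(k:ℝ)) - 1)
        rw [show -(k:ℝ) - 1 + 1 = -(k:ℝ) by ring] at this
        linarith
      rw [hre]
      push_cast
      ring
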